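/- Let d ≥ 1 and r > d be integers, and let p ∈ ℝ[x] be a polynomial of degree at most d+1 all of whose coefficients are nonnegative. Then the polynomial ((1 + x + ⋯ + x^{r−1})^{d+1} · p)^{⟨r,0⟩} has only real zeros. (Theorem 6.4, giving a positive answer to the Mohammadi–Welker problem on edgewise subdivisions: if C is a d-dimensional simplicial complex with nonnegative h-vector, then h(C^{⟨r⟩};x) = ((1+x+⋯+x^{r−1})^{d+1} h(C;x))^{⟨r,0⟩} is real-rooted for r > d.) -/

import Mathlib

open Polynomial

/-- A real polynomial is real-rooted (has only real zeros) if it is identically zero or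
all of its complex zeros are real. -/
def RealRooted (p : Polynomial ℝ) : Prop :=
  ∀ z ∈ (p.map (algebraMap ℝ ℂ)).roots, z.im = 0

/-- The `⟨r, i⟩`-section of a polynomial `p`: the polynomial whose coefficient of `x^m` is
the coefficient of `x^{r·m + i}` in `p` (so that `p(x) = ∑_{i=0}^{r-1} x^i p^{⟨r,i⟩}(x^r)`
for `1 ≤ r` and `0 ≤ i < r`). -/
noncomputable def sect (r i : ℕ) (p : Polynomial ℝ) : Polynomial ℝ :=
  ∑ m ∈ Finset.range (p.natDegree + 1), Polynomial.C (p.coeff (r * m + i)) * Polynomial.X ^ m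


open Finset

lemma coeff_sect (r i : ℕ) (hr : 0 < r) (q : Polynomial ℝ) (m : ℕ) :
    (sect r i q).coeff m = q.coeff (r * m + i) := by
  unfold sect
  rw [finset_sum_coeff]
  simp only [coeff_C_mul, coeff_X_pow, mul_ite, mul_one, mul_zero]
  by_cases hm : m ∈ Finset.range (q.natDegree + 1)
  · rw [Finset.sum_eq_single m]
    · simp
    · intro b _ hb; rw [if_neg (Ne.symm hb)]
    · intro h; exact absurd hm h
  · rw [Finset.sum_eq_zero]
    · symm
      apply coeff_eq_zero_of_natDegree_lt
      simp only [Finset.mem_range, not_lt] at hm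
      have : m ≤ r * m := Nat.le_mul_of_pos_left m hr
      omega
    · intro b hb
      have : b ≠ m := by rintro rfl; exact hm hb
      rw [if_neg (Ne.symm this)]

lemma sect_sigma_mul (r : ℕ) (hr : 0 < r) (i : ℕ) (hi : i < r) (q : Polynomial ℝ) :
    sect r i ((∑ j ∈ Finset.range r, (Polynomial.X : Polynomial ℝ) ^ j) * q)
      = (∑ l ∈ Finset.range (i+1), sect r l q)
        + Polynomial.X * ∑ l ∈ Finset.Ico (i+1) r, sect r l q := by
  ext m
  rw [coeff_sect r i hr, coeff_add, finset_sum_coeff]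
  simp only [coeff_sect r _ hr]
  have hL : ∀ n, ((∑ j ∈ Finset.range r, (Polynomial.X : Polynomial ℝ) ^ j) * q).coeff n
      = ∑ j ∈ Finset.range r, (if j ≤ n then q.coeff (n - j) else 0) := by
    intro n
    rw [Finset.sum_mul, finset_sum_coeff]
    refine Finset.sum_congr rfl (fun j _ => ?_)
    rw [Polynomial.X_pow_mul, coeff_mul_X_pow']
  rw [hL]
  have hsplit : Finset.range r = Finset.Ico 0 r := by rw [Nat.Ico_zero_eq_range]
  rw [hsplit, ← Finset.sum_Ico_consecutive _ (Nat.zero_le (i+1)) hi, Nat.Ico_zero_eq_range]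
  cases m with
  | zero =>
    have h1 : ∑ j ∈ Finset.range (i+1), (if j ≤ r * 0 + i then q.coeff (r * 0 + i - j) else 0)
        = ∑ l ∈ Finset.range (i+1), q.coeff (r * 0 + l) := by
      rw [← Finset.sum_range_reflect (fun l => q.coeff (r * 0 + l)) (i+1)]
      refine Finset.sum_congr rfl (fun j hj => ?_)
      simp only [Finset.mem_range] at hj
      rw [if_pos (by omega)]
      congr 1
      omega
    rw [h1]
    have h2 : ∑ j ∈ Finset.Ico (i+1) r, (if j ≤ r * 0 + i then q.coeff (r * 0 + i - j) else 0)
        = 0 := by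
      refine Finset.sum_eq_zero (fun j hj => ?_)
      simp only [Finset.mem_Ico] at hj
      rw [if_neg (by omega)]
    rw [h2]
    simp
  | succ k =>
    have hrm : r * (k+1) = r * k + r := by ring
    have h1 : ∑ j ∈ Finset.range (i+1), (if j ≤ r * (k+1) + i then q.coeff (r * (k+1) + i - j) else 0)
        = ∑ l ∈ Finset.range (i+1), q.coeff (r * (k+1) + l) := by
      rw [← Finset.sum_range_reflect (fun l => q.coeff (r * (k+1) + l)) (i+1)]
      refine Finset.sum_congr rfl (fun j hj => ?_)
      simp only [Finset.mem_range] at hj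
      rw [if_pos (by omega)]
      congr 1
      omega
    have h2 : ∑ j ∈ Finset.Ico (i+1) r, (if j ≤ r * (k+1) + i then q.coeff (r * (k+1) + i - j) else 0)
        = ∑ l ∈ Finset.Ico (i+1) r, q.coeff (r * k + l) := by
      refine Finset.sum_nbij' (fun j => r + i - j) (fun l => r + i - l) ?_ ?_ ?_ ?_ ?_
      · intro a ha; simp only [Finset.mem_Ico] at *; omega
      · intro a ha; simp only [Finset.mem_Ico] at *; omega
      · intro a ha; simp only [Finset.mem_Ico] at ha; omega
      · intro a ha; simp only [Finset.mem_Ico] at ha; omega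
      · intro a ha
        simp only [Finset.mem_Ico] at ha
        rw [if_pos (by omega)]
        congr 1
        omega
    rw [h1, h2, Polynomial.coeff_X_mul, finset_sum_coeff]
    simp only [coeff_sect r _ hr]

open Complex in
/-- The closed convex cone of complex numbers with argument in `[0, arg y]`. -/
def InS (y w : ℂ) : Prop := 0 ≤ w.im ∧ ((starRingEnd ℂ) y * w).im ≤ 0

section InS
variable {y : ℂ}

lemma InS_zero : InS y 0 := by simp [InS]

lemma InS_add {w w' : ℂ} (h : InS y w) (h' : InS y w') : InS y (w + w') := by
  obtain ⟨h1, h2⟩ := h; obtain ⟨h1', h2'⟩ := h'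
  constructor
  · simp only [Complex.add_im]; linarith
  · rw [mul_add]; simp only [Complex.add_im]; linarith

lemma InS_sum {α : Type*} {s : Finset α} {f : α → ℂ} (h : ∀ a ∈ s, InS y (f a)) :
    InS y (∑ a ∈ s, f a) := by
  classical
  induction s using Finset.induction_on with
  | empty => simpa using InS_zero
  | insert _ _ hnotmem ih =>
    rw [Finset.sum_insert hnotmem]
    exact InS_add (h _ (Finset.mem_insert_self _ _))
      (ih fun a ha => h a (Finset.mem_insert_of_mem ha))

lemma InS_ofReal (hy : 0 < y.im) {c : ℝ} (hc : 0 ≤ c) : InS y (c : ℂ) := by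
  constructor
  · simp
  · simp only [Complex.mul_im, Complex.ofReal_re, Complex.ofReal_im, mul_zero, add_zero,
      Complex.conj_im, Complex.conj_re]
    nlinarith [hy.le]

lemma InS_real_smul {c : ℝ} (hc : 0 ≤ c) {w : ℂ} (h : InS y w) : InS y ((c : ℂ) * w) := by
  obtain ⟨h1, h2⟩ := h
  constructor
  · rw [Complex.mul_im]; simp only [Complex.ofReal_re, Complex.ofReal_im, zero_mul, add_zero]
    exact mul_nonneg hc h1
  · have : (starRingEnd ℂ) y * ((c:ℂ) * w) = (c:ℂ) * ((starRingEnd ℂ) y * w) := by ring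
    rw [this, Complex.mul_im]
    simp only [Complex.ofReal_re, Complex.ofReal_im, zero_mul, add_zero]
    nlinarith

lemma InS_y_mul_ofReal (hy : 0 < y.im) {c : ℝ} (hc : 0 ≤ c) : InS y (y * (c : ℂ)) := by
  constructor
  · rw [Complex.mul_im]; simp only [Complex.ofReal_re, Complex.ofReal_im, mul_zero, add_zero]
    nlinarith [mul_nonneg hy.le hc]
  · have : (starRingEnd ℂ) y * (y * (c:ℂ)) = (c:ℂ) * ((starRingEnd ℂ) y * y) := by ring
    rw [this]
    have h2 : (starRingEnd ℂ) y * y = (Complex.normSq y : ℂ) := by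
      rw [mul_comm, Complex.mul_conj]
    rw [h2, ← Complex.ofReal_mul]
    simp

lemma InS_y_conj {w : ℂ} (h : InS y w) : InS y (y * (starRingEnd ℂ) w) := by
  obtain ⟨h1, h2⟩ := h
  constructor
  · have : (y * (starRingEnd ℂ) w).im = -((starRingEnd ℂ) y * w).im := by
      simp [Complex.mul_im, Complex.conj_re, Complex.conj_im]; ring
    rw [this]; linarith
  · have : (starRingEnd ℂ) y * (y * (starRingEnd ℂ) w)
        = (Complex.normSq y : ℂ) * (starRingEnd ℂ) w := by
      rw [← mul_assoc, mul_comm ((starRingEnd ℂ) y) y, Complex.mul_conj]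
    rw [this, Complex.mul_im]
    simp only [Complex.ofReal_re, Complex.ofReal_im, zero_mul, add_zero, Complex.conj_im]
    nlinarith [Complex.normSq_nonneg y]

/-- `S_y` contains no nonzero "negative real" : if `w ∈ S_y` equals `-c` for `c > 0`, contradiction. -/
lemma InS_not_neg_real (hy : 0 < y.im) {c : ℝ} (hc : 0 < c) : ¬ InS y (-(c : ℂ)) := by
  rintro ⟨h1, h2⟩
  rw [mul_neg] at h2
  simp only [Complex.neg_im, Complex.mul_im, Complex.ofReal_re, Complex.ofReal_im, mul_zero,
    add_zero, Complex.conj_im] at h2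
  nlinarith

end InS

noncomputable def Hval (r : ℕ) (y : ℂ) (q : Polynomial ℝ) (i : ℕ) : ℂ :=
  Polynomial.aeval y (sect r i q)

lemma Hval_sigma_mul (r : ℕ) (hr : 0 < r) (y : ℂ) (i : ℕ) (hi : i < r) (q : Polynomial ℝ) :
    Hval r y ((∑ j ∈ Finset.range r, (Polynomial.X : Polynomial ℝ) ^ j) * q) i
      = (∑ l ∈ Finset.range (i+1), Hval r y q l)
        + y * ∑ l ∈ Finset.Ico (i+1) r, Hval r y q l := by
  unfold Hval
  rw [sect_sigma_mul r hr i hi q, map_add, map_sum, map_mul, Polynomial.aeval_X, map_sum]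

lemma step_W (r : ℕ) (hr : 0 < r) (y : ℂ) (hy : 0 < y.im) (q : Polynomial ℝ)
    (hW : ∀ i j, i ≤ j → j < r → InS y (Hval r y q i * (starRingEnd ℂ) (Hval r y q j))) :
    ∀ i j, i ≤ j → j < r →
      InS y (Hval r y ((∑ j ∈ Finset.range r, (Polynomial.X : Polynomial ℝ) ^ j) * q) i
        * (starRingEnd ℂ) (Hval r y ((∑ j ∈ Finset.range r, (Polynomial.X : Polynomial ℝ) ^ j) * q) j)) := by
  intro i j hij hj
  have hi : i < r := lt_of_le_of_lt hij hj
  set U : ℂ := ∑ l ∈ Finset.range (i+1), Hval r y q l with hU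
  set V : ℂ := ∑ l ∈ Finset.Ico (i+1) (j+1), Hval r y q l with hV
  set W : ℂ := ∑ l ∈ Finset.Ico (j+1) r, Hval r y q l with hW2
  have hQi : ∑ l ∈ Finset.Ico (i+1) r, Hval r y q l = V + W :=
    (Finset.sum_Ico_consecutive _ (by omega) (by omega)).symm
  have hUj : ∑ l ∈ Finset.range (j+1), Hval r y q l = U + V := by
    rw [hU, hV]; simp only [Finset.range_eq_Ico]
    exact (Finset.sum_Ico_consecutive (fun l => Hval r y q l) (m := 0) (n := i+1) (k := j+1) (by omega) (by omega)).symm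
  have hQj : ∑ l ∈ Finset.Ico (j+1) r, Hval r y q l = W := rfl
  rw [Hval_sigma_mul r hr y i hi q, Hval_sigma_mul r hr y j hj q, hQi, hUj, hQj, ← hU]
  -- key algebraic identity
  have key : (U + y * (V + W)) * (starRingEnd ℂ) (U + V + y * W)
      = (U + y * W) * (starRingEnd ℂ) (U + y * W)
        + y * (V * (starRingEnd ℂ) V)
        + (U * (starRingEnd ℂ) V + y * (starRingEnd ℂ) (U * (starRingEnd ℂ) V))
        + ((Complex.normSq y : ℂ) * (V * (starRingEnd ℂ) W)
            + y * (starRingEnd ℂ) (V * (starRingEnd ℂ) W)) := by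
    have hnsq : (Complex.normSq y : ℂ) = y * (starRingEnd ℂ) y := (Complex.mul_conj y).symm
    rw [hnsq]
    simp only [map_add, map_mul, Complex.conj_conj]
    ring
  rw [key]
  -- memberships
  have hUV : InS y (U * (starRingEnd ℂ) V) := by
    rw [hU, hV, map_sum, Finset.sum_mul_sum]
    refine InS_sum (fun l hl => InS_sum (fun m hm => ?_))
    simp only [Finset.mem_range] at hl
    simp only [Finset.mem_Ico] at hm
    exact hW l m (by omega) (by omega)
  have hVW : InS y (V * (starRingEnd ℂ) W) := by
    rw [hV, hW2, map_sum, Finset.sum_mul_sum]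
    refine InS_sum (fun l hl => InS_sum (fun m hm => ?_))
    simp only [Finset.mem_Ico] at hl hm
    exact hW l m (by omega) (by omega)
  refine InS_add (InS_add (InS_add ?_ ?_) ?_) ?_
  · rw [Complex.mul_conj]
    exact InS_ofReal hy (Complex.normSq_nonneg _)
  · rw [Complex.mul_conj]
    exact InS_y_mul_ofReal hy (Complex.normSq_nonneg _)
  · exact InS_add hUV (InS_y_conj hUV)
  · exact InS_add (InS_real_smul (Complex.normSq_nonneg y) hVW) (InS_y_conj hVW)

lemma step_N (r : ℕ) (hr : 0 < r) (y : ℂ) (hy : 0 < y.im) (q : Polynomial ℝ)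
    (hW : ∀ i j, i ≤ j → j < r → InS y (Hval r y q i * (starRingEnd ℂ) (Hval r y q j)))
    (hN : ∀ i, i < r → Hval r y q i ≠ 0) :
    ∀ i, i < r →
      Hval r y ((∑ j ∈ Finset.range r, (Polynomial.X : Polynomial ℝ) ^ j) * q) i ≠ 0 := by
  intro i hi
  rw [Hval_sigma_mul r hr y i hi q]
  set U : ℂ := ∑ l ∈ Finset.range (i+1), Hval r y q l with hU
  set Q : ℂ := ∑ l ∈ Finset.Ico (i+1) r, Hval r y q l with hQ
  have hUne : U ≠ 0 := by
    intro h0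
    have h1 : U * (starRingEnd ℂ) (Hval r y q i)
        = (∑ l ∈ Finset.range i, Hval r y q l * (starRingEnd ℂ) (Hval r y q i))
          + (Complex.normSq (Hval r y q i) : ℂ) := by
      rw [hU, Finset.sum_mul, Finset.sum_range_succ, Complex.mul_conj]
    have h2 : InS y (∑ l ∈ Finset.range i, Hval r y q l * (starRingEnd ℂ) (Hval r y q i)) := by
      refine InS_sum (fun l hl => ?_)
      simp only [Finset.mem_range] at hl
      exact hW l i (by omega) hi
    have h3 : (∑ l ∈ Finset.range i, Hval r y q l * (starRingEnd ℂ) (Hval r y q i))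
        = -(Complex.normSq (Hval r y q i) : ℂ) := by
      have := h1
      rw [h0, zero_mul] at this
      linear_combination -this
    rw [h3] at h2
    exact InS_not_neg_real hy (Complex.normSq_pos.mpr (hN i hi)) h2
  by_cases hir : i + 1 < r
  · have hQne : Q ≠ 0 := by
      intro h0
      have h1 : Hval r y q (i+1) * (starRingEnd ℂ) Q
          = (Complex.normSq (Hval r y q (i+1)) : ℂ)
            + ∑ l ∈ (Finset.Ico (i+1) r).erase (i+1),
                Hval r y q (i+1) * (starRingEnd ℂ) (Hval r y q l) := by
        rw [hQ, map_sum, Finset.mul_sum, ← Complex.mul_conj]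
        exact (Finset.add_sum_erase _ _ (Finset.mem_Ico.mpr ⟨le_refl _, hir⟩)).symm
      have h2 : InS y (∑ l ∈ (Finset.Ico (i+1) r).erase (i+1),
          Hval r y q (i+1) * (starRingEnd ℂ) (Hval r y q l)) := by
        refine InS_sum (fun l hl => ?_)
        have hl' := Finset.mem_of_mem_erase hl
        simp only [Finset.mem_Ico] at hl'
        exact hW (i+1) l (by omega) (by omega)
      have h3 : (∑ l ∈ (Finset.Ico (i+1) r).erase (i+1),
          Hval r y q (i+1) * (starRingEnd ℂ) (Hval r y q l))
          = -(Complex.normSq (Hval r y q (i+1)) : ℂ) := by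
        have := h1
        rw [h0, map_zero, mul_zero] at this
        linear_combination -this
      rw [h3] at h2
      exact InS_not_neg_real hy (Complex.normSq_pos.mpr (hN (i+1) hir)) h2
    intro h0
    have hUQ : InS y (U * (starRingEnd ℂ) Q) := by
      rw [hU, hQ, map_sum, Finset.sum_mul_sum]
      refine InS_sum (fun l hl => InS_sum (fun m hm => ?_))
      simp only [Finset.mem_range] at hl
      simp only [Finset.mem_Ico] at hm
      exact hW l m (by omega) (by omega)
    have hUeq : U = -(y * Q) := by linear_combination h0
    have : U * (starRingEnd ℂ) Q = -(y * (Complex.normSq Q : ℂ)) := by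
      rw [hUeq, ← Complex.mul_conj]
      ring
    rw [this] at hUQ
    have him : (-(y * (Complex.normSq Q : ℂ))).im < 0 := by
      simp only [Complex.neg_im, Complex.mul_im, Complex.ofReal_re, Complex.ofReal_im,
        mul_zero, add_zero]
      have : 0 < Complex.normSq Q := Complex.normSq_pos.mpr hQne
      nlinarith
    linarith [hUQ.1]
  · have hQ0 : Q = 0 := by
      rw [hQ, Finset.Ico_eq_empty (by omega), Finset.sum_empty]
    rw [hQ0, mul_zero, add_zero]
    exact hUne

lemma sect_base (r : ℕ) (hr : 0 < r) (p : Polynomial ℝ) (hdeg : p.natDegree ≤ r) (l : ℕ) :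
    sect r l p = Polynomial.C (p.coeff l) + Polynomial.C (p.coeff (r + l)) * Polynomial.X := by
  ext m
  rw [coeff_sect r l hr]
  match m with
  | 0 => simp
  | 1 => simp [mul_one]
  | (k+2) =>
    rw [Polynomial.coeff_add, Polynomial.coeff_C, Polynomial.coeff_C_mul, Polynomial.coeff_X]
    have h2 : p.natDegree < r * (k + 2) + l := by
      have : 2 * r ≤ r * (k+2) := by nlinarith
      omega
    rw [Polynomial.coeff_eq_zero_of_natDegree_lt h2]
    simp

lemma Hval_base (r : ℕ) (hr : 0 < r) (y : ℂ) (p : Polynomial ℝ) (hdeg : p.natDegree ≤ r)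
    (l : ℕ) :
    Hval r y p l = (p.coeff l : ℂ) + (p.coeff (r + l) : ℂ) * y := by
  unfold Hval
  rw [sect_base r hr p hdeg l]
  simp [Polynomial.aeval_def]

lemma base_W (r : ℕ) (hr : 0 < r) (y : ℂ) (hy : 0 < y.im) (p : Polynomial ℝ)
    (hdeg : p.natDegree ≤ r) (hcoeff : ∀ k, 0 ≤ p.coeff k) :
    ∀ i j, i ≤ j → j < r → InS y (Hval r y p i * (starRingEnd ℂ) (Hval r y p j)) := by
  intro i j hij hj
  rcases Nat.eq_zero_or_pos j with hj0 | hj1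
  · subst hj0
    interval_cases i
    rw [Complex.mul_conj]
    exact InS_ofReal hy (Complex.normSq_nonneg _)
  · have hrj : p.coeff (r + j) = 0 := by
      apply Polynomial.coeff_eq_zero_of_natDegree_lt
      omega
    rw [Hval_base r hr y p hdeg i, Hval_base r hr y p hdeg j, hrj]
    set a := p.coeff i
    set b := p.coeff (r + i)
    set c := p.coeff j
    have ha : 0 ≤ a := hcoeff i
    have hb : 0 ≤ b := hcoeff (r + i)
    have hc : 0 ≤ c := hcoeff j
    have hval : ((a:ℂ) + (b:ℂ) * y) * (starRingEnd ℂ) ((c:ℂ) + (0:ℝ) * y)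
        = ((a*c : ℝ) : ℂ) + ((b*c : ℝ):ℂ) * y := by
      push_cast
      simp only [Complex.ofReal_zero, map_add, map_mul, map_zero, Complex.conj_ofReal]
      ring
    rw [hval]
    constructor
    · simp only [Complex.add_im, Complex.ofReal_im, Complex.mul_im, Complex.ofReal_re, zero_add,
        mul_zero, add_zero]
      nlinarith [mul_nonneg (mul_nonneg hb hc) hy.le]
    · have : (starRingEnd ℂ) y * (((a*c : ℝ) : ℂ) + ((b*c : ℝ):ℂ) * y)
          = ((a*c:ℝ):ℂ) * (starRingEnd ℂ) y + ((b*c:ℝ):ℂ) * ((starRingEnd ℂ) y * y) := by ring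
      rw [this]
      have h2 : (starRingEnd ℂ) y * y = (Complex.normSq y : ℂ) := by
        rw [mul_comm, Complex.mul_conj]
      rw [h2]
      simp only [Complex.add_im, Complex.mul_im, Complex.ofReal_re, Complex.ofReal_im,
        Complex.conj_re, Complex.conj_im, zero_mul, add_zero, mul_zero]
      nlinarith [mul_nonneg (mul_nonneg ha hc) hy.le]

lemma base_N (r : ℕ) (hr : 0 < r) (y : ℂ) (hy : 0 < y.im) (p : Polynomial ℝ) (hp : p ≠ 0)
    (hdeg : p.natDegree ≤ r) (hcoeff : ∀ k, 0 ≤ p.coeff k) :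
    ∀ i, i < r →
      Hval r y ((∑ j ∈ Finset.range r, (Polynomial.X : Polynomial ℝ) ^ j) * p) i ≠ 0 := by
  intro i hi
  rw [Hval_sigma_mul r hr y i hi p]
  simp only [Hval_base r hr y p hdeg]
  set A : ℝ := ∑ l ∈ Finset.range (i+1), p.coeff l with hA
  set B : ℝ := ∑ l ∈ Finset.Ico (i+1) r, p.coeff l with hB
  have hU : ∑ l ∈ Finset.range (i+1), ((p.coeff l : ℂ) + (p.coeff (r + l) : ℂ) * y)
      = (A : ℂ) + (p.coeff r : ℂ) * y := by
    rw [Finset.sum_add_distrib, ← Finset.sum_mul, hA]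
    push_cast
    congr 2
    rw [Finset.sum_range_succ']
    have : ∀ l ∈ Finset.range i, ((p.coeff (r + (l + 1)) : ℝ) : ℂ) = 0 := by
      intro l _
      rw [Polynomial.coeff_eq_zero_of_natDegree_lt (by omega)]
      simp
    rw [Finset.sum_congr rfl this]
    simp
  have hQ : ∑ l ∈ Finset.Ico (i+1) r, ((p.coeff l : ℂ) + (p.coeff (r + l) : ℂ) * y)
      = (B : ℂ) := by
    rw [Finset.sum_add_distrib, hB]
    push_cast
    have : ∀ l ∈ Finset.Ico (i+1) r, ((p.coeff (r + l) : ℝ) : ℂ) * y = 0 := by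
      intro l hl
      simp only [Finset.mem_Ico] at hl
      rw [Polynomial.coeff_eq_zero_of_natDegree_lt (by omega)]
      simp
    rw [Finset.sum_congr rfl this]
    simp
  rw [hU, hQ]
  set C : ℝ := p.coeff r + B with hC
  have heq : (A : ℂ) + (p.coeff r : ℂ) * y + y * (B : ℂ) = (A : ℂ) + (C : ℂ) * y := by
    rw [hC]; push_cast; ring
  rw [heq]
  -- positivity of A + C
  have hAnn : 0 ≤ A := Finset.sum_nonneg (fun l _ => hcoeff l)
  have hBnn : 0 ≤ B := Finset.sum_nonneg (fun l _ => hcoeff l)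
  have hCnn : 0 ≤ C := by rw [hC]; exact add_nonneg (hcoeff r) hBnn
  have hABsum : A + B = ∑ l ∈ Finset.range r, p.coeff l := by
    rw [hA, hB]; simp only [Finset.range_eq_Ico]
    exact Finset.sum_Ico_consecutive (fun l => p.coeff l) (m := 0) (n := i+1) (k := r) (by omega) (by omega)
  have hk : 0 < p.coeff p.natDegree :=
    lt_of_le_of_ne (hcoeff p.natDegree) (Ne.symm (Polynomial.leadingCoeff_ne_zero.mpr hp))
  have hpos : 0 < A + C := by
    rcases Nat.lt_or_ge p.natDegree r with hlt | hge
    · have : p.coeff p.natDegree ≤ ∑ l ∈ Finset.range r, p.coeff l :=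
        Finset.single_le_sum (fun l _ => hcoeff l) (Finset.mem_range.mpr hlt)
      rw [hC]
      have := hcoeff r
      nlinarith [hABsum]
    · have hkr : p.natDegree = r := le_antisymm hdeg hge
      rw [hC, ← hkr]
      nlinarith
  intro h0
  have him : ((A : ℂ) + (C : ℂ) * y).im = C * y.im := by
    simp [Complex.add_im, Complex.mul_im]
  have hre : ((A : ℂ) + (C : ℂ) * y).re = A + C * y.re := by
    simp [Complex.add_re, Complex.mul_re]
  rw [h0] at him hre
  simp only [Complex.zero_im, Complex.zero_re] at him hre
  have hC0 : C = 0 := by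
    rcases mul_eq_zero.mp him.symm with h | h
    · exact h
    · exact absurd h (ne_of_gt hy)
  rw [hC0] at hpos
  rw [hC0] at hre
  simp only [zero_mul, add_zero] at hre
  linarith

lemma main_nonzero (r n : ℕ) (hr : 0 < r) (hn : 1 ≤ n) (p : Polynomial ℝ) (hp : p ≠ 0)
    (hdeg : p.natDegree ≤ r) (hcoeff : ∀ k, 0 ≤ p.coeff k) (y : ℂ) (hy : 0 < y.im) :
    ∀ i, i < r →
      Hval r y ((∑ j ∈ Finset.range r, (Polynomial.X : Polynomial ℝ) ^ j) ^ n * p) i ≠ 0 := by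
  have key : ∀ m : ℕ,
      (∀ i j, i ≤ j → j < r →
        InS y (Hval r y ((∑ j ∈ Finset.range r, (Polynomial.X : Polynomial ℝ) ^ j) ^ m * p) i
          * (starRingEnd ℂ)
            (Hval r y ((∑ j ∈ Finset.range r, (Polynomial.X : Polynomial ℝ) ^ j) ^ m * p) j)))
      ∧ (1 ≤ m → ∀ i, i < r →
          Hval r y ((∑ j ∈ Finset.range r, (Polynomial.X : Polynomial ℝ) ^ j) ^ m * p) i ≠ 0) := by
    intro m
    induction m with
    | zero =>
      constructor
      · simpa [pow_zero, one_mul] using base_W r hr y hy p hdeg hcoeff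
      · omega
    | succ m ih =>
      have hmul : (∑ j ∈ Finset.range r, (Polynomial.X : Polynomial ℝ) ^ j) ^ (m+1) * p
          = (∑ j ∈ Finset.range r, (Polynomial.X : Polynomial ℝ) ^ j)
            * ((∑ j ∈ Finset.range r, (Polynomial.X : Polynomial ℝ) ^ j) ^ m * p) := by
        ring
      constructor
      · rw [hmul]
        exact step_W r hr y hy _ ih.1
      · intro _
        rw [hmul]
        rcases Nat.eq_zero_or_pos m with hm0 | hm1
        · subst hm0
          simpa [pow_zero, one_mul] using base_N r hr y hy p hp hdeg hcoeff
        · exact step_N r hr y hy _ ih.1 (ih.2 hm1)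
  exact (key n).2 hn

lemma main_ne_zero' (r n : ℕ) (hr : 0 < r) (hn : 1 ≤ n) (p : Polynomial ℝ) (hp : p ≠ 0)
    (hdeg : p.natDegree ≤ r) (hcoeff : ∀ k, 0 ≤ p.coeff k) (y : ℂ) (hy : y.im ≠ 0) :
    Polynomial.aeval y
      (sect r 0 ((∑ j ∈ Finset.range r, (Polynomial.X : Polynomial ℝ) ^ j) ^ n * p)) ≠ 0 := by
  rcases lt_or_gt_of_ne hy with hneg | hpos
  · -- use conjugate
    have hconj : Polynomial.aeval ((starRingEnd ℂ) y)
        (sect r 0 ((∑ j ∈ Finset.range r, (Polynomial.X : Polynomial ℝ) ^ j) ^ n * p))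
        = (starRingEnd ℂ) (Polynomial.aeval y
            (sect r 0 ((∑ j ∈ Finset.range r, (Polynomial.X : Polynomial ℝ) ^ j) ^ n * p))) := by
      exact Polynomial.aeval_algHom_apply
        (AlgEquiv.toAlgHom Complex.conjAe) y _
    intro h0
    have him : 0 < ((starRingEnd ℂ) y).im := by
      rw [Complex.conj_im]; linarith
    have := main_nonzero r n hr hn p hp hdeg hcoeff ((starRingEnd ℂ) y) him 0 hr
    apply this
    unfold Hval
    rw [hconj, h0, map_zero]
  · exact main_nonzero r n hr hn p hp hdeg hcoeff y hpos 0 hr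


/-- Theorem 6.4 (solution to the Mohammadi–Welker problem on edgewise subdivisions):
for `d ≥ 1`, `r > d`, and every real polynomial `p` of degree at most `d+1` with
nonnegative coefficients, the polynomial `((1 + x + ⋯ + x^{r-1})^{d+1} · p)^{⟨r,0⟩}`
has only real zeros. -/
theorem edgewise_veronese_real_rooted (d r : ℕ) (hd : 1 ≤ d) (hr : d < r)
    (p : Polynomial ℝ) (hdeg : p.natDegree ≤ d + 1) (hcoeff : ∀ k, 0 ≤ p.coeff k) :
    RealRooted
      (sect r 0 ((∑ i ∈ Finset.range r, (Polynomial.X : Polynomial ℝ) ^ i) ^ (d + 1) * p)) := by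
  intro z hz
  by_cases hp : p = 0
  · subst hp
    rw [mul_zero] at hz
    have hs : sect r 0 (0 : Polynomial ℝ) = 0 := by
      unfold sect; simp
    rw [hs, Polynomial.map_zero, Polynomial.roots_zero] at hz
    exact absurd hz (Multiset.notMem_zero z)
  · by_contra him
    obtain ⟨hne, hroot⟩ := Polynomial.mem_roots'.mp hz
    apply main_ne_zero' r (d+1) (by omega) (by omega) p hp (by omega) hcoeff z him
    rw [Polynomial.aeval_def, ← Polynomial.eval_map]
    exact hroot
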